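/- For positive integers k ≤ n, the sum of 1/(l₁·l₂⋯l_k) over all k-tuples (l₁,…,l_k) of positive integers with l₁+l₂+⋯+l_k = n equals (k!/n!)·e_{n-k}(1,2,…,n-1), where e_l denotes the l-th elementary symmetric polynomial. -/

import Mathlib

open Finset Polynomial

/-- The set of `k`-tuples of positive integers summing to `n`. -/
def P (k n : ℕ) : Finset (Fin k → ℕ) :=
  (Finset.Nat.antidiagonalTuple k n).filter fun l => ∀ i, 0 < l i

/-- `∑_{(l₁,…,l_k)∈P(k,n)} 1/(l₁⋯l_k)`. -/
def S (k n : ℕ) : ℚ := ∑ l ∈ P k n, (∏ i, (l i : ℚ))⁻¹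

/-- `e_l(1,2,…,m)` : the l-th elementary symmetric polynomial evaluated at 1,…,m. -/
def esym (m l : ℕ) : ℚ := (((Finset.range m).val.map fun i => ((i : ℚ) + 1)).esymm l)

lemma mem_P {k n : ℕ} {l : Fin k → ℕ} : l ∈ P k n ↔ (∑ i, l i) = n ∧ ∀ i, 0 < l i := by
  simp [P, Finset.Nat.mem_antidiagonalTuple]

lemma esym_zero (m : ℕ) : esym m 0 = 1 := by
  simp [esym, Multiset.esymm]

lemma esym_eq_zero {m l : ℕ} (h : m < l) : esym m l = 0 := by
  rw [esym, Multiset.esymm, Multiset.powersetCard_eq_empty]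
  · simp
  · simpa using h


lemma esymm_cons (a : ℚ) (s : Multiset ℚ) (l : ℕ) :
    (a ::ₘ s).esymm (l+1) = s.esymm (l+1) + a * s.esymm l := by
  rw [Multiset.esymm, Multiset.powersetCard_cons, Multiset.map_add, Multiset.sum_add,
    Multiset.map_map, Multiset.esymm, Multiset.esymm, ← Multiset.sum_map_mul_left]
  refine congrArg _ (congrArg _ (Multiset.map_congr rfl fun t ht => ?_))
  simp [Multiset.prod_cons]

lemma esym_succ (m l : ℕ) :
    esym (m+1) (l+1) = esym m (l+1) + ((m : ℚ)+1) * esym m l := by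
  have key : (((Finset.range (m+1)).val.map fun i => ((i : ℚ) + 1))) =
      ((m:ℚ)+1) ::ₘ ((Finset.range m).val.map fun i => ((i : ℚ) + 1)) := by
    simp [Finset.range_add_one]
  unfold esym
  rw [key, esymm_cons]
lemma esym_self (m : ℕ) : esym m m = m.factorial := by
  induction m with
  | zero => simpa using esym_zero 0
  | succ m ih =>
    rw [esym_succ, esym_eq_zero (Nat.lt_succ_self m), ih, Nat.factorial_succ]
    push_cast
    ring

lemma S_eq_zero {k n : ℕ} (h : n < k) : S k n = 0 := by
  refine Finset.sum_eq_zero fun l hl => ?_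
  obtain ⟨hsum, hpos⟩ := mem_P.mp hl
  have : (k : ℕ) ≤ n := by
    calc k = ∑ _i : Fin k, 1 := by simp
    _ ≤ ∑ i, l i := Finset.sum_le_sum fun i _ => hpos i
    _ = n := hsum
  omega

lemma S_one {n : ℕ} (hn : 0 < n) : S 1 n = (n : ℚ)⁻¹ := by
  have : P 1 n = {fun _ => n} := by
    ext l
    simp only [mem_P, Finset.mem_singleton, Fin.sum_univ_one]
    constructor
    · rintro ⟨h1, _⟩; funext i; fin_cases i; exact h1
    · rintro rfl; exact ⟨rfl, fun _ => hn⟩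
  simp [S, this]

lemma rec1 (k n : ℕ) (i : Fin (k+1)) :
    ∑ l ∈ (P (k+1) (n+1)).filter (fun l => l i = 1), (l i : ℚ) * (∏ j, (l j : ℚ))⁻¹
      = S k n := by
  rw [S]
  refine Finset.sum_nbij' (fun l => i.removeNth l) (fun m => i.insertNth 1 m) ?_ ?_ ?_ ?_ ?_
  · intro l hl
    rw [Finset.mem_filter] at hl
    obtain ⟨hP, hl1⟩ := hl
    obtain ⟨hsum, hpos⟩ := mem_P.mp hP
    rw [Fin.sum_univ_succAbove (fun j => l j) i, hl1] at hsum
    refine mem_P.mpr ⟨?_, fun j => hpos _⟩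
    simp only [Fin.removeNth]
    omega
  · intro m hm
    obtain ⟨hsum, hpos⟩ := mem_P.mp hm
    rw [Finset.mem_filter]
    refine ⟨mem_P.mpr ⟨?_, ?_⟩, ?_⟩
    · rw [Fin.sum_univ_succAbove (fun j => i.insertNth 1 m j) i,
        Fin.insertNth_apply_same]
      simp only [Fin.insertNth_apply_succAbove]
      omega
    · intro j
      rcases eq_or_ne j i with rfl | hne
      · rw [Fin.insertNth_apply_same]; exact one_pos
      · obtain ⟨j', rfl⟩ := Fin.exists_succAbove_eq hne
        rw [Fin.insertNth_apply_succAbove]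
        exact hpos j'
    · rw [Fin.insertNth_apply_same]
  · intro l hl
    rw [Finset.mem_filter] at hl
    have := Fin.insertNth_self_removeNth i l
    rwa [hl.2] at this
  · intro m hm
    funext j
    simp [Fin.removeNth, Fin.insertNth_apply_succAbove]
  · intro l hl
    rw [Finset.mem_filter] at hl
    rw [Fin.prod_univ_succAbove (fun j => (l j : ℚ)) i, hl.2]
    simp [Fin.removeNth]

lemma rec2 (k n : ℕ) (i : Fin (k+1)) :
    ∑ l ∈ (P (k+1) (n+1)).filter (fun l => ¬ l i = 1), (l i : ℚ) * (∏ j, (l j : ℚ))⁻¹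
      = ∑ m ∈ P (k+1) n, (m i : ℚ) * (∏ j, (m j : ℚ))⁻¹ := by
  refine Finset.sum_nbij' (fun l => Function.update l i (l i - 1))
    (fun m => Function.update m i (m i + 1)) ?_ ?_ ?_ ?_ ?_
  · intro l hl
    rw [Finset.mem_filter] at hl
    obtain ⟨hP, hl1⟩ := hl
    obtain ⟨hsum, hpos⟩ := mem_P.mp hP
    have h2 : 2 ≤ l i := by have := hpos i; omega
    rw [Fin.sum_univ_succAbove (fun j => l j) i] at hsum
    refine mem_P.mpr ⟨?_, ?_⟩
    · rw [Fin.sum_univ_succAbove (fun j => Function.update l i (l i - 1) j) i,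
        Function.update_self]
      have hup : ∀ j : Fin k, Function.update l i (l i - 1) (i.succAbove j) = l (i.succAbove j) :=
        fun j => Function.update_of_ne (Fin.succAbove_ne i j) _ _
      rw [Finset.sum_congr rfl fun j _ => hup j]
      omega
    · intro j
      rcases eq_or_ne j i with rfl | hne
      · rw [Function.update_self]; omega
      · rw [Function.update_of_ne hne]; exact hpos j
  · intro m hm
    obtain ⟨hsum, hpos⟩ := mem_P.mp hm
    rw [Fin.sum_univ_succAbove (fun j => m j) i] at hsum
    rw [Finset.mem_filter]
    refine ⟨mem_P.mpr ⟨?_, ?_⟩, ?_⟩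
    · rw [Fin.sum_univ_succAbove (fun j => Function.update m i (m i + 1) j) i,
        Function.update_self]
      have hup : ∀ j : Fin k, Function.update m i (m i + 1) (i.succAbove j) = m (i.succAbove j) :=
        fun j => Function.update_of_ne (Fin.succAbove_ne i j) _ _
      rw [Finset.sum_congr rfl fun j _ => hup j]
      omega
    · intro j
      rcases eq_or_ne j i with rfl | hne
      · rw [Function.update_self]; omega
      · rw [Function.update_of_ne hne]; exact hpos j
    · rw [Function.update_self]
      have := hpos i; omega
  · intro l hl
    rw [Finset.mem_filter] at hl
    have h2 : 2 ≤ l i := by have := (mem_P.mp hl.1).2 i; have := hl.2; omega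
    funext j
    rcases eq_or_ne j i with rfl | hne
    · simp only [Function.update_self]; omega
    · simp only [Function.update_of_ne hne]
  · intro m hm
    funext j
    rcases eq_or_ne j i with rfl | hne
    · simp only [Function.update_self]; omega
    · simp only [Function.update_of_ne hne]
  · intro l hl
    rw [Finset.mem_filter] at hl
    have h2 : 2 ≤ l i := by have := (mem_P.mp hl.1).2 i; have := hl.2; omega
    have hup : (fun j : Fin k => ((Function.update l i (l i - 1) (i.succAbove j) : ℕ) : ℚ))
        = fun j => ((l (i.succAbove j) : ℕ) : ℚ) := by
      funext j; rw [Function.update_of_ne (Fin.succAbove_ne i j)]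
    rw [Fin.prod_univ_succAbove (fun j => (l j : ℚ)) i,
      Fin.prod_univ_succAbove (fun j => ((Function.update l i (l i - 1) j : ℕ) : ℚ)) i,
      Function.update_self]
    rw [show (∏ j : Fin k, ((Function.update l i (l i - 1) (i.succAbove j) : ℕ) : ℚ))
        = ∏ j : Fin k, ((l (i.succAbove j) : ℕ) : ℚ) from congrArg _ hup]
    have ha : (l i : ℚ) ≠ 0 := Nat.cast_ne_zero.mpr (by omega)
    have hb : ((l i - 1 : ℕ) : ℚ) ≠ 0 := Nat.cast_ne_zero.mpr (by omega)
    rw [mul_inv, mul_inv, ← mul_assoc, ← mul_assoc, mul_inv_cancel₀ ha, mul_inv_cancel₀ hb]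

lemma S_rec (k n : ℕ) :
    ((n:ℚ)+1) * S (k+1) (n+1) = ((k:ℚ)+1) * S k n + (n:ℚ) * S (k+1) n := by
  have h1 : ((n:ℚ)+1) * S (k+1) (n+1)
      = ∑ l ∈ P (k+1) (n+1), ∑ j, (l j : ℚ) * (∏ i, (l i : ℚ))⁻¹ := by
    rw [S, Finset.mul_sum]
    refine Finset.sum_congr rfl fun l hl => ?_
    obtain ⟨hsum, -⟩ := mem_P.mp hl
    rw [← Finset.sum_mul]
    congr 1
    have : ((∑ j, l j : ℕ) : ℚ) = ∑ j, (l j : ℚ) := by push_cast; rfl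
    rw [← this, hsum]
    push_cast; ring
  rw [h1, Finset.sum_comm]
  have h2 : ∀ i : Fin (k+1), ∑ l ∈ P (k+1) (n+1), (l i : ℚ) * (∏ j, (l j : ℚ))⁻¹
      = S k n + ∑ m ∈ P (k+1) n, (m i : ℚ) * (∏ j, (m j : ℚ))⁻¹ := fun i => by
    rw [← Finset.sum_filter_add_sum_filter_not (P (k+1) (n+1)) (fun l => l i = 1),
      rec1, rec2]
  rw [Finset.sum_congr rfl (fun i _ => h2 i), Finset.sum_add_distrib, Finset.sum_const,
    Finset.sum_comm]
  have h3 : ∑ m ∈ P (k+1) n, ∑ i : Fin (k+1), (m i : ℚ) * (∏ j, (m j : ℚ))⁻¹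
      = (n:ℚ) * S (k+1) n := by
    rw [S, Finset.mul_sum]
    refine Finset.sum_congr rfl fun m hm => ?_
    obtain ⟨hsum, -⟩ := mem_P.mp hm
    rw [← Finset.sum_mul]
    congr 1
    have : ((∑ j, m j : ℕ) : ℚ) = ∑ j, (m j : ℚ) := by push_cast; rfl
    rw [← this, hsum]
  rw [h3]
  congr 1
  simp [Finset.card_univ, nsmul_eq_mul]

theorem stmt0 (k n : ℕ) (hk : 0 < k) (hkn : k ≤ n) :
    S k n = (k.factorial : ℚ) / n.factorial * esym (n - 1) (n - k) := by
  induction n generalizing k with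
  | zero => omega
  | succ n ih =>
    rcases Nat.eq_or_lt_of_le hk with h1 | h2
    · -- k = 1
      have hk1 : k = 1 := h1.symm
      subst hk1
      rw [S_one (Nat.succ_pos n)]
      simp only [Nat.add_sub_cancel, Nat.factorial_one, esym_self]
      rw [Nat.factorial_succ]
      have h0 : ((n+1 : ℕ) : ℚ) ≠ 0 := by positivity
      have hf : ((n.factorial : ℕ) : ℚ) ≠ 0 := Nat.cast_ne_zero.mpr n.factorial_ne_zero
      field_simp
      push_cast; ring
    · -- k ≥ 2, write k = k'+1 with k' ≥ 1
      obtain ⟨k', rfl⟩ : ∃ k', k = k' + 1 := ⟨k - 1, by omega⟩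
      have hk' : 0 < k' := by omega
      have hk'n : k' ≤ n := by omega
      have hrec := S_rec k' n
      have hn0 : ((n:ℚ)+1) ≠ 0 := by positivity
      have hSk : S k' n = (k'.factorial : ℚ) / n.factorial * esym (n-1) (n-k') :=
        ih k' hk' hk'n
      rcases Nat.eq_or_lt_of_le hk'n with he | hlt
      · -- k' = n
        subst he
        have hz : S (k'+1) k' = 0 := S_eq_zero (by omega)
        rw [hz, hSk, mul_zero, add_zero] at hrec
        simp only [Nat.sub_self, esym_zero, mul_one] at hrec
        have hf : (k'.factorial : ℚ) ≠ 0 := Nat.cast_ne_zero.mpr k'.factorial_ne_zero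
        have hne : ((k':ℚ)+1) ≠ 0 := by positivity
        have hS1 : S (k'+1) (k'+1) = 1 := by
          have := hrec
          rw [div_self hf, mul_one] at this
          exact mul_left_cancel₀ hne (by rw [this, mul_one])
        rw [hS1]
        simp only [Nat.add_sub_cancel, Nat.sub_self, esym_zero, mul_one]
        rw [div_self (Nat.cast_ne_zero.mpr (k'+1).factorial_ne_zero)]
      · -- k'+1 ≤ n
        have hS2 : S (k'+1) n = ((k'+1).factorial : ℚ)/n.factorial * esym (n-1) (n-(k'+1)) :=
          ih (k'+1) (by omega) hlt
        rw [hSk, hS2] at hrec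
        have hes : esym n (n - k') = esym (n-1) (n-k') + (n:ℚ) * esym (n-1) (n-k'-1) := by
          have h1 : n - k' = (n - k' - 1) + 1 := by omega
          have h2 : n = (n-1) + 1 := by omega
          calc esym n (n-k') = esym ((n-1)+1) ((n-k'-1)+1) := by rw [← h1, ← h2]
          _ = esym (n-1) ((n-k'-1)+1) + (((n-1:ℕ):ℚ)+1) * esym (n-1) (n-k'-1) := esym_succ _ _
          _ = esym (n-1) (n-k') + (n:ℚ) * esym (n-1) (n-k'-1) := by
              rw [← h1]
              congr 2
              push_cast [Nat.cast_sub (by omega : 1 ≤ n)]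
              ring
        simp only [Nat.add_sub_cancel, show n + 1 - (k'+1) = n - k' from by omega]
        rw [hes]
        have hne : ((n:ℚ)+1) ≠ 0 := by positivity
        have hkey : S (k'+1) (n+1)
            = (((k':ℚ)+1) * ((k'.factorial:ℚ)/n.factorial * esym (n-1) (n-k'))
              + (n:ℚ) * (((k'+1).factorial:ℚ)/n.factorial * esym (n-1) (n-(k'+1)))) / ((n:ℚ)+1) := by
          rw [eq_div_iff hne, mul_comm, hrec]
        rw [hkey]
        have hfac : (((k'+1).factorial : ℕ):ℚ) = ((k':ℚ)+1) * k'.factorial := by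
          rw [Nat.factorial_succ]; push_cast; ring
        have hfacn : (((n+1).factorial : ℕ):ℚ) = ((n:ℚ)+1) * n.factorial := by
          rw [Nat.factorial_succ]; push_cast; ring
        rw [show n - (k'+1) = n - k' - 1 from by omega, hfac, hfacn]
        have hfn : (n.factorial : ℚ) ≠ 0 := Nat.cast_ne_zero.mpr n.factorial_ne_zero
        field_simp
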